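/- Let G be a graph on n ≥ 2 vertices, k ≥ 1 and ℓ ≥ 0 integers, and let G' with terminals s, t be the pair-copies graph of G. Then G contains a path P with at least two vertices such that |V(P)| ≤ k and |N_G(V(P))| ≥ ℓ if and only if G' contains an st-path P' with |V(P')| ≤ k + 2 and |N_{G'}(V(P'))| ≥ ℓ + 2(binom(n,2) − 1). -/

import Mathlib

open SimpleGraph

/-- The open neighborhood of a vertex set `S`: vertices outside `S` adjacent to some
vertex of `S`. -/
def openNbhd {V : Type*} (G : SimpleGraph V) (S : Set V) : Set V :=
  {v | v ∉ S ∧ ∃ w ∈ S, G.Adj v w}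

/-- The pair-copies graph `G'` of a graph `G` with a linear order on its vertices:
for every pair `v < w` of vertices of `G` there is a disjoint copy of `G`
(modelled as `Sum.inl (⟨(v, w), _⟩, a)` for `a : V`), together with two new
vertices `s = Sum.inr false` and `t = Sum.inr true`, where `s` is adjacent exactly
to the copy of `v` in each copy `G_{vw}`, and `t` is adjacent exactly to the copy
of `w` in each copy `G_{vw}`. -/
def pairCopies {V : Type*} [LinearOrder V] (G : SimpleGraph V) :
    SimpleGraph (({q : V × V // q.1 < q.2} × V) ⊕ Bool) :=
  SimpleGraph.fromRel (fun a b =>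
    match a, b with
    | Sum.inl (e, a), Sum.inl (e', b) => e = e' ∧ G.Adj a b
    | Sum.inr false, Sum.inl (e, a) => a = e.1.1
    | Sum.inr true, Sum.inl (e, a) => a = e.1.2
    | _, _ => False)



theorem card_ltPairs {α : Type*} [LinearOrder α] [Fintype α] :
    Fintype.card {q : α × α // q.1 < q.2} = (Fintype.card α).choose 2 := by
  classical
  rw [← Fintype.card_finset_len 2]
  apply Fintype.card_of_bijective (f := fun q => (⟨{q.1.1, q.1.2}, Finset.card_pair q.2.ne⟩ :
    { s : Finset α // s.card = 2 }))
  constructor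
  · rintro ⟨⟨a,b⟩,hab⟩ ⟨⟨c,d⟩,hcd⟩ h
    simp only [Subtype.mk.injEq] at h ⊢
    simp only at hab hcd
    have h1 : a = c ∨ a = d := by
      have : a ∈ ({c, d} : Finset α) := by rw [← h]; simp
      simpa using this
    have h2 : b = c ∨ b = d := by
      have : b ∈ ({c, d} : Finset α) := by rw [← h]; simp
      simpa using this
    have h3 : c = a ∨ c = b := by
      have : c ∈ ({a, b} : Finset α) := by rw [h]; simp
      simpa using this
    have hac : a = c := by
      rcases h1 with h1 | h1
      · exact h1
      · rcases h3 with h3 | h3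
        · exact h3.symm
        · exfalso; rw [h1, ← h3] at hab; exact lt_asymm hab hcd
    have hbd : b = d := by
      rcases h2 with h2 | h2
      · exfalso; rw [h2, hac] at hab; exact lt_irrefl _ hab
      · exact h2
    rw [hac, hbd]
  · rintro ⟨s, hs⟩
    obtain ⟨a, b, hab, rfl⟩ := Finset.card_eq_two.mp hs
    rcases hab.lt_or_gt with h | h
    · exact ⟨⟨(a, b), h⟩, rfl⟩
    · exact ⟨⟨(b, a), h⟩, by simp [Finset.pair_comm]⟩

section
variable {V : Type*} [LinearOrder V] {G : SimpleGraph V}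

lemma pc_adj_inl_inl {e e' : {q : V × V // q.1 < q.2}} {a b : V} :
    (pairCopies G).Adj (Sum.inl (e, a)) (Sum.inl (e', b)) ↔ e = e' ∧ G.Adj a b := by
  simp only [pairCopies, fromRel_adj]
  constructor
  · rintro ⟨hne, (⟨rfl, h⟩ | ⟨rfl, h⟩)⟩
    · exact ⟨rfl, h⟩
    · exact ⟨rfl, h.symm⟩
  · rintro ⟨rfl, h⟩
    exact ⟨by simp [h.ne], Or.inl ⟨rfl, h⟩⟩

lemma pc_adj_s_inl {e : {q : V × V // q.1 < q.2}} {a : V} :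
    (pairCopies G).Adj (Sum.inr false) (Sum.inl (e, a)) ↔ a = e.1.1 := by
  simp only [pairCopies, fromRel_adj]
  constructor
  · rintro ⟨hne, (h | h)⟩
    · exact h
    · exact h.elim
  · rintro rfl
    exact ⟨by simp, Or.inl rfl⟩

lemma pc_adj_t_inl {e : {q : V × V // q.1 < q.2}} {a : V} :
    (pairCopies G).Adj (Sum.inr true) (Sum.inl (e, a)) ↔ a = e.1.2 := by
  simp only [pairCopies, fromRel_adj]
  constructor
  · rintro ⟨hne, (h | h)⟩
    · exact h
    · exact h.elim
  · rintro rfl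
    exact ⟨by simp, Or.inl rfl⟩

lemma pc_not_adj_inr {b b' : Bool} : ¬ (pairCopies G).Adj (Sum.inr b) (Sum.inr b') := by
  cases b <;> cases b' <;> simp [pairCopies, fromRel_adj]

lemma openNbhd_pc (e : {q : V × V // q.1 < q.2}) (S : Set V)
    (h1 : e.1.1 ∈ S) (h2 : e.1.2 ∈ S) :
    openNbhd (pairCopies G)
      ({Sum.inr false, Sum.inr true} ∪ (fun a => (Sum.inl (e, a) :
        ({q : V × V // q.1 < q.2} × V) ⊕ Bool)) '' S)
    = (fun a => (Sum.inl (e, a) : ({q : V × V // q.1 < q.2} × V) ⊕ Bool)) '' openNbhd G S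
      ∪ {x | ∃ e', e' ≠ e ∧ (x = Sum.inl (e', e'.1.1) ∨ x = Sum.inl (e', e'.1.2))} := by
  ext x
  cases x with
  | inr b =>
    constructor
    · rintro ⟨hx, -⟩
      exfalso; apply hx; cases b
      · exact Or.inl (Or.inl rfl)
      · exact Or.inl (Or.inr rfl)
    · rintro (⟨y, -, hy⟩ | ⟨e', -, (h | h)⟩) <;> simp_all
  | inl q =>
    obtain ⟨e'', y⟩ := q
    constructor
    · rintro ⟨hx, w, hw, hadj⟩
      by_cases he : e'' = e
      · subst he
        have hyS : y ∉ S := fun hyS => hx (Or.inr ⟨y, hyS, rfl⟩)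
        left
        rcases hw with (rfl | rfl) | ⟨z, hz, rfl⟩
        · exact absurd (pc_adj_s_inl.mp hadj.symm ▸ h1) hyS
        · exact absurd (pc_adj_t_inl.mp hadj.symm ▸ h2) hyS
        · exact ⟨y, ⟨hyS, z, hz, (pc_adj_inl_inl.mp hadj).2⟩, rfl⟩
      · right
        rcases hw with (rfl | rfl) | ⟨z, hz, rfl⟩
        · exact ⟨e'', he, Or.inl (by rw [pc_adj_s_inl.mp hadj.symm])⟩
        · exact ⟨e'', he, Or.inr (by rw [pc_adj_t_inl.mp hadj.symm])⟩
        · exact absurd (pc_adj_inl_inl.mp hadj).1 he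
    · rintro (⟨z, ⟨hzS, w, hwS, hadj⟩, hz⟩ | ⟨e', hne, (h | h)⟩)
      · obtain ⟨rfl, rfl⟩ : e = e'' ∧ z = y := by simpa using hz
        refine ⟨?_, Sum.inl (e, w), Or.inr ⟨w, hwS, rfl⟩, pc_adj_inl_inl.mpr ⟨rfl, hadj⟩⟩
        rintro ((h|h) | ⟨zz, hzz, h⟩)
        · simp at h
        · simp at h
        · obtain ⟨-, rfl⟩ : e = e ∧ zz = z := by simpa using h
          exact hzS hzz
      · obtain ⟨rfl, rfl⟩ : e'' = e' ∧ y = e'.1.1 := by simpa using h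
        refine ⟨?_, Sum.inr false, Or.inl (Or.inl rfl), (pc_adj_s_inl.mpr rfl).symm⟩
        rintro ((h|h) | ⟨z', hz', h⟩)
        · simp at h
        · simp at h
        · simp only [Sum.inl.injEq, Prod.mk.injEq] at h
          exact hne h.1.symm
      · obtain ⟨rfl, rfl⟩ : e'' = e' ∧ y = e'.1.2 := by simpa using h
        refine ⟨?_, Sum.inr true, Or.inl (Or.inr rfl), (pc_adj_t_inl.mpr rfl).symm⟩
        rintro ((h|h) | ⟨z', hz', h⟩)
        · simp at h
        · simp at h
        · simp only [Sum.inl.injEq, Prod.mk.injEq] at h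
          exact hne h.1.symm

lemma ncard_B [Fintype V] (e : {q : V × V // q.1 < q.2}) :
    ({x : ({q : V × V // q.1 < q.2} × V) ⊕ Bool |
        ∃ e', e' ≠ e ∧ (x = Sum.inl (e', e'.1.1) ∨ x = Sum.inl (e', e'.1.2))}).ncard
      = 2 * (Fintype.card {q : V × V // q.1 < q.2} - 1) := by
  classical
  have hB : {x : ({q : V × V // q.1 < q.2} × V) ⊕ Bool |
        ∃ e', e' ≠ e ∧ (x = Sum.inl (e', e'.1.1) ∨ x = Sum.inl (e', e'.1.2))}
      = (fun e' : {q : V × V // q.1 < q.2} =>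
          (Sum.inl (e', e'.1.1) : ({q : V × V // q.1 < q.2} × V) ⊕ Bool)) '' {e}ᶜ
        ∪ (fun e' : {q : V × V // q.1 < q.2} =>
          (Sum.inl (e', e'.1.2) : ({q : V × V // q.1 < q.2} × V) ⊕ Bool)) '' {e}ᶜ := by
    ext x
    constructor
    · rintro ⟨e', hne, (rfl | rfl)⟩
      · exact Or.inl ⟨e', hne, rfl⟩
      · exact Or.inr ⟨e', hne, rfl⟩
    · rintro (⟨e', hne, rfl⟩ | ⟨e', hne, rfl⟩)
      · exact ⟨e', hne, Or.inl rfl⟩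
      · exact ⟨e', hne, Or.inr rfl⟩
  have hinj1 : Function.Injective (fun e' : {q : V × V // q.1 < q.2} =>
      (Sum.inl (e', e'.1.1) : ({q : V × V // q.1 < q.2} × V) ⊕ Bool)) := by
    intro a b h
    simpa using (by simpa using h : a = b ∧ _).1
  have hinj2 : Function.Injective (fun e' : {q : V × V // q.1 < q.2} =>
      (Sum.inl (e', e'.1.2) : ({q : V × V // q.1 < q.2} × V) ⊕ Bool)) := by
    intro a b h
    simpa using (by simpa using h : a = b ∧ _).1
  have hdisj : Disjoint ((fun e' : {q : V × V // q.1 < q.2} =>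
      (Sum.inl (e', e'.1.1) : ({q : V × V // q.1 < q.2} × V) ⊕ Bool)) '' {e}ᶜ)
      ((fun e' : {q : V × V // q.1 < q.2} =>
      (Sum.inl (e', e'.1.2) : ({q : V × V // q.1 < q.2} × V) ⊕ Bool)) '' {e}ᶜ) := by
    rw [Set.disjoint_left]
    rintro x ⟨a, -, rfl⟩ ⟨b, -, h⟩
    obtain ⟨rfl, h2⟩ : b = a ∧ b.1.2 = a.1.1 := by simpa using h
    exact absurd h2 (b.2.ne')
  have hcompl : ({e}ᶜ : Set {q : V × V // q.1 < q.2}).ncard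
      = Fintype.card {q : V × V // q.1 < q.2} - 1 := by
    rw [← Nat.card_eq_fintype_card, ← Set.ncard_univ, ← Set.ncard_singleton e, Set.compl_eq_univ_diff]
    exact Set.ncard_diff (Set.subset_univ _)
  rw [hB, Set.ncard_union_eq hdisj,
    Set.ncard_image_of_injective _ hinj1, Set.ncard_image_of_injective _ hinj2, hcompl]
  ring

lemma ncard_openNbhd_pc [Fintype V] (e : {q : V × V // q.1 < q.2}) (S : Set V)
    (h1 : e.1.1 ∈ S) (h2 : e.1.2 ∈ S) :
    (openNbhd (pairCopies G)
      ({Sum.inr false, Sum.inr true} ∪ (fun a => (Sum.inl (e, a) :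
        ({q : V × V // q.1 < q.2} × V) ⊕ Bool)) '' S)).ncard
    = (openNbhd G S).ncard + 2 * (Fintype.card {q : V × V // q.1 < q.2} - 1) := by
  classical
  rw [openNbhd_pc e S h1 h2]
  have hinj : Function.Injective (fun a : V => (Sum.inl (e, a) :
      ({q : V × V // q.1 < q.2} × V) ⊕ Bool)) := by
    intro a b h
    simpa using h
  have hdisj : Disjoint ((fun a : V => (Sum.inl (e, a) :
      ({q : V × V // q.1 < q.2} × V) ⊕ Bool)) '' openNbhd G S)
      {x : ({q : V × V // q.1 < q.2} × V) ⊕ Bool |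
        ∃ e', e' ≠ e ∧ (x = Sum.inl (e', e'.1.1) ∨ x = Sum.inl (e', e'.1.2))} := by
    rw [Set.disjoint_left]
    rintro x ⟨a, -, rfl⟩ ⟨e', hne, (h | h)⟩
    · exact hne (by simpa using (by simpa using h : e = e' ∧ _).1.symm)
    · exact hne (by simpa using (by simpa using h : e = e' ∧ _).1.symm)
  rw [Set.ncard_union_eq hdisj, Set.ncard_image_of_injective _ hinj, ncard_B]

def pcHom (G : SimpleGraph V) (e : {q : V × V // q.1 < q.2}) : G →g pairCopies G where
  toFun a := Sum.inl (e, a)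
  map_rel' h := pc_adj_inl_inl.mpr ⟨rfl, h⟩

lemma pc_support_len {e : {q : V × V // q.1 < q.2}} {a b : V} (r : G.Walk a b)
    (p' : (pairCopies G).Walk (Sum.inr false) (Sum.inr true))
    (h : p'.support = Sum.inr false ::
      (r.support.map (fun x => (Sum.inl (e, x) : ({q : V × V // q.1 < q.2} × V) ⊕ Bool))
        ++ [Sum.inr true])) :
    p'.support.length = r.support.length + 2 := by
  rw [h]; simp

lemma pc_support_set {e : {q : V × V // q.1 < q.2}} {a b : V} (r : G.Walk a b)
    (p' : (pairCopies G).Walk (Sum.inr false) (Sum.inr true))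
    (h : p'.support = Sum.inr false ::
      (r.support.map (fun x => (Sum.inl (e, x) : ({q : V × V // q.1 < q.2} × V) ⊕ Bool))
        ++ [Sum.inr true])) :
    {x | x ∈ p'.support} = {Sum.inr false, Sum.inr true} ∪
      (fun x => (Sum.inl (e, x) : ({q : V × V // q.1 < q.2} × V) ⊕ Bool)) ''
        {x | x ∈ r.support} := by
  ext x
  simp only [h, Set.mem_setOf_eq, List.mem_cons, List.mem_append, List.mem_map,
    List.mem_singleton, Set.mem_union, Set.mem_insert_iff, Set.mem_singleton_iff,
    Set.mem_image]
  aesop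

lemma pc_nodup_iff {e : {q : V × V // q.1 < q.2}} {a b : V} (r : G.Walk a b)
    (p' : (pairCopies G).Walk (Sum.inr false) (Sum.inr true))
    (h : p'.support = Sum.inr false ::
      (r.support.map (fun x => (Sum.inl (e, x) : ({q : V × V // q.1 < q.2} × V) ⊕ Bool))
        ++ [Sum.inr true])) :
    p'.support.Nodup ↔ r.support.Nodup := by
  have hinj : Function.Injective (fun x : V => (Sum.inl (e, x) :
      ({q : V × V // q.1 < q.2} × V) ⊕ Bool)) := by
    intro x y hxy; simpa using hxy
  rw [h, List.nodup_cons, List.nodup_append, List.nodup_map_iff hinj]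
  simp [List.Disjoint]

lemma pc_inner {e : {q : V × V // q.1 < q.2}} (u w : ({q : V × V // q.1 < q.2} × V) ⊕ Bool)
    (q : (pairCopies G).Walk u w) :
    q.support.Nodup → (Sum.inr false) ∉ q.support →
    w = Sum.inr true → ∀ a : V, u = Sum.inl (e, a) →
    ∃ r : G.Walk a e.1.2, q.support =
      r.support.map (fun x => (Sum.inl (e, x) : ({q : V × V // q.1 < q.2} × V) ⊕ Bool))
        ++ [Sum.inr true] := by
  induction q with
  | nil =>
    intro _ _ hw a ha
    rw [hw] at ha
    exact absurd ha (by simp)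
  | @cons u y _ h' q' ih =>
    intro hnd hs hw a ha
    subst ha
    rw [SimpleGraph.Walk.support_cons] at hnd hs ⊢
    rw [List.nodup_cons] at hnd
    have hs' : (Sum.inr false : ({q : V × V // q.1 < q.2} × V) ⊕ Bool) ∉ q'.support := by
      intro hmem; exact hs (List.mem_cons_of_mem _ hmem)
    match y, h', q' with
    | Sum.inr false, h', q' =>
      exact absurd q'.start_mem_support hs'
    | Sum.inr true, h', q' =>
      subst hw
      have ha2 : a = e.1.2 := pc_adj_t_inl.mp h'.symm
      subst ha2
      have : q' = SimpleGraph.Walk.nil := by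
        rw [← SimpleGraph.Walk.isPath_iff_eq_nil, SimpleGraph.Walk.isPath_def]
        exact hnd.2
      subst this
      exact ⟨SimpleGraph.Walk.nil, by simp⟩
    | Sum.inl (e2, b), h', q' =>
      obtain ⟨rfl, hab⟩ := pc_adj_inl_inl.mp h'
      obtain ⟨r', hr'⟩ := ih hnd.2 hs' hw b rfl
      exact ⟨SimpleGraph.Walk.cons hab r', by simp [hr']⟩

end

/-- Short unsecluded: |V(P)| ≤ k, |N| ≥ ℓ iff ... in G'. -/
theorem stmt_11 {V : Type*} [Fintype V] [LinearOrder V] (G : SimpleGraph V)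
    (hn : 2 ≤ Fintype.card V) (k ℓ : ℕ) (hk : 1 ≤ k) :
    (∃ (u v : V) (p : G.Walk u v), p.IsPath ∧ 2 ≤ p.support.length ∧
        p.support.length ≤ k ∧ ℓ ≤ (openNbhd G {x | x ∈ p.support}).ncard) ↔
      (∃ p' : (pairCopies G).Walk (Sum.inr false) (Sum.inr true), p'.IsPath ∧
        p'.support.length ≤ k + 2 ∧ ℓ + 2 * ((Fintype.card V).choose 2 - 1) ≤ (openNbhd (pairCopies G) {x | x ∈ p'.support}).ncard) := by
  constructor
  · rintro ⟨u, v, p, hp, h2, hk', hl⟩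
    have hne : u ≠ v := by
      rintro rfl
      have := (SimpleGraph.Walk.isPath_iff_eq_nil (p := p)).mp hp
      subst this
      simp at h2
    obtain ⟨e, p₀, hp₀, hsupset, hsuplen⟩ :
        ∃ (e : {q : V × V // q.1 < q.2}) (p₀ : G.Walk e.1.1 e.1.2), p₀.IsPath ∧
          {x | x ∈ p₀.support} = {x | x ∈ p.support} ∧
          p₀.support.length = p.support.length := by
      rcases hne.lt_or_gt with h | h
      · exact ⟨⟨(u, v), h⟩, p, hp, rfl, rfl⟩
      · exact ⟨⟨(v, u), h⟩, p.reverse, hp.reverse, by ext x; simp, by simp⟩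
    set p' : (pairCopies G).Walk (Sum.inr false) (Sum.inr true) :=
      SimpleGraph.Walk.cons (pc_adj_s_inl.mpr rfl)
        ((p₀.map (pcHom G e)).concat ((pc_adj_t_inl.mpr rfl).symm)) with hp'def
    have hsupp : p'.support = Sum.inr false ::
        (p₀.support.map (fun x => (Sum.inl (e, x) : ({q : V × V // q.1 < q.2} × V) ⊕ Bool))
          ++ [Sum.inr true]) := by
      simp [hp'def, SimpleGraph.Walk.support_concat, SimpleGraph.Walk.support_map,
        List.concat_eq_append, pcHom]
    refine ⟨p', ?_, ?_, ?_⟩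
    · rw [SimpleGraph.Walk.isPath_def, pc_nodup_iff p₀ p' hsupp]
      exact hp₀.support_nodup
    · rw [pc_support_len p₀ p' hsupp, hsuplen]
      omega
    · rw [pc_support_set p₀ p' hsupp,
        ncard_openNbhd_pc e {x | x ∈ p₀.support} p₀.start_mem_support p₀.end_mem_support, card_ltPairs,
        hsupset]
      exact Nat.add_le_add_right hl _
  · rintro ⟨p', hp', hk', hl⟩
    cases p' with
    | @cons _ y _ h q =>
      rcases y with ⟨e, c⟩ | b
      · obtain rfl : c = e.1.1 := pc_adj_s_inl.mp h
        have hnd : ((SimpleGraph.Walk.cons h q).support).Nodup :=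
          SimpleGraph.Walk.isPath_def _ |>.mp hp'
        rw [SimpleGraph.Walk.support_cons, List.nodup_cons] at hnd
        obtain ⟨r, hr⟩ := pc_inner _ _ q hnd.2 hnd.1 rfl e.1.1 rfl
        have hsupp : (SimpleGraph.Walk.cons h q).support = Sum.inr false ::
            (r.support.map (fun x => (Sum.inl (e, x) :
              ({q : V × V // q.1 < q.2} × V) ⊕ Bool)) ++ [Sum.inr true]) := by
          rw [SimpleGraph.Walk.support_cons, hr]
        have hrlen : r.length ≠ 0 := by
          intro h0
          exact e.2.ne (SimpleGraph.Walk.eq_of_length_eq_zero h0)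
        refine ⟨e.1.1, e.1.2, r, ?_, ?_, ?_, ?_⟩
        · rw [SimpleGraph.Walk.isPath_def]
          exact (pc_nodup_iff r _ hsupp).mp (SimpleGraph.Walk.isPath_def _ |>.mp hp')
        · rw [SimpleGraph.Walk.length_support]
          omega
        · have := pc_support_len r _ hsupp
          omega
        · rw [pc_support_set r _ hsupp,
            ncard_openNbhd_pc e {x | x ∈ r.support} r.start_mem_support r.end_mem_support, card_ltPairs] at hl
          omega
      · exact absurd h pc_not_adj_inr
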